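/- One-time pad privacy-leakage bound: let G be a finite abelian group and let S, S' be G-valued random variables and X, W', F', Z' random variables with finite ranges, such that S is uniformly distributed on G and independent of (X, Z', W', S', F'). Then I(X; (W', S' + S, Z') | F') ≤ I(X; (W', Z') | F'), where + denotes the group operation in G. -/
import Mathlib


open scoped Classical
open Real

noncomputable section

namespace PA

/-- A probability mass function on a finite type, represented as a real-valued function. -/
def IsPMF {Ω : Type*} [Fintype Ω] (p : Ω → ℝ) : Prop :=
  (∀ ω, 0 ≤ p ω) ∧ (∑ ω, p ω) = 1

/-- Probability of an event under the pmf `p`. -/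
def probOf {Ω : Type*} [Fintype Ω] (p : Ω → ℝ) (E : Ω → Prop) : ℝ :=
  ∑ ω, if E ω then p ω else 0

/-- Shannon entropy (in bits, i.e. base-2 logarithm) of the random variable `X`
under the pmf `p`. -/
def ent {Ω α : Type*} [Fintype Ω] [Fintype α] (p : Ω → ℝ) (X : Ω → α) : ℝ :=
  (∑ a : α, Real.negMulLog (probOf p (fun ω => X ω = a))) / Real.log 2

/-- Conditional Shannon entropy `H(X | Z)` (in bits). -/
def condEnt {Ω α β : Type*} [Fintype Ω] [Fintype α] [Fintype β]
    (p : Ω → ℝ) (X : Ω → α) (Z : Ω → β) : ℝ :=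
  ent p (fun ω => (X ω, Z ω)) - ent p Z

/-- Mutual information `I(X;Y)` (in bits). -/
def mutInf {Ω α β : Type*} [Fintype Ω] [Fintype α] [Fintype β]
    (p : Ω → ℝ) (X : Ω → α) (Y : Ω → β) : ℝ :=
  ent p X + ent p Y - ent p (fun ω => (X ω, Y ω))

/-- Conditional mutual information `I(X;Y|Z)` (in bits). -/
def condMutInf {Ω α β γ : Type*} [Fintype Ω] [Fintype α] [Fintype β] [Fintype γ]
    (p : Ω → ℝ) (X : Ω → α) (Y : Ω → β) (Z : Ω → γ) : ℝ :=
  ent p (fun ω => (X ω, Z ω)) + ent p (fun ω => (Y ω, Z ω))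
    - ent p (fun ω => (X ω, Y ω, Z ω)) - ent p Z

/-- `X` and `Y` are conditionally independent given `M`, i.e. `X − M − Y` forms a
Markov chain. -/
def CondIndep {Ω α β γ : Type*} [Fintype Ω]
    (p : Ω → ℝ) (X : Ω → α) (M : Ω → β) (Y : Ω → γ) : Prop :=
  ∀ x m y,
    probOf p (fun ω => X ω = x ∧ M ω = m ∧ Y ω = y) * probOf p (fun ω => M ω = m)
      = probOf p (fun ω => X ω = x ∧ M ω = m) * probOf p (fun ω => M ω = m ∧ Y ω = y)

end PA

open PA

section Aux

variable {Ω : Type*} [Fintype Ω] (p : Ω → ℝ)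

lemma probOf_congr {E E' : Ω → Prop} (h : ∀ ω, E ω ↔ E' ω) :
    probOf p E = probOf p E' := by
  unfold probOf
  exact Finset.sum_congr rfl fun ω _ => by simp [h ω]

lemma probOf_fiber {T : Type*} [Fintype T] (Y : Ω → T) (E : Ω → Prop) :
    probOf p E = ∑ t, probOf p (fun ω => E ω ∧ Y ω = t) := by
  unfold probOf
  rw [Finset.sum_comm]
  refine Finset.sum_congr rfl fun ω _ => ?_
  by_cases h : E ω <;> simp [h]

lemma sum_probOf_eq (hp : IsPMF p) {T : Type*} [Fintype T] (Y : Ω → T) :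
    ∑ t, probOf p (fun ω => Y ω = t) = 1 := by
  unfold probOf
  rw [Finset.sum_comm]
  simpa using hp.2

lemma ent_equiv {α β : Type*} [Fintype α] [Fintype β] (e : α ≃ β) (Y : Ω → α) :
    ent p (fun ω => e (Y ω)) = ent p Y := by
  unfold ent
  congr 1
  rw [← e.sum_comp]
  refine Finset.sum_congr rfl fun a _ => ?_
  congr 1
  exact probOf_congr p fun ω => by simp

lemma mul_negMulLog_div (n q : ℝ) (hn : n ≠ 0) :
    n * Real.negMulLog (q / n) = Real.negMulLog q + q * Real.log n := by
  rcases eq_or_ne q 0 with h | h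
  · simp [h]
  · have hq : q / n ≠ 0 := div_ne_zero h hn
    simp only [Real.negMulLog, Real.log_div h hn]
    field_simp
    ring

lemma ent_pair_unif {α GG : Type*} [Fintype α] [Fintype GG] [Nonempty GG]
    (hp : IsPMF p) (V : Ω → α) (K : Ω → GG)
    (h : ∀ v k, probOf p (fun ω => V ω = v ∧ K ω = k)
        = probOf p (fun ω => V ω = v) / (Fintype.card GG : ℝ)) :
    ent p (fun ω => (V ω, K ω))
      = ent p V + Real.log (Fintype.card GG) / Real.log 2 := by
  have hn : (Fintype.card GG : ℝ) ≠ 0 := by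
    exact_mod_cast (Fintype.card_pos).ne'
  have key : ∑ a : α × GG, Real.negMulLog (probOf p fun ω => (V ω, K ω) = a)
      = (∑ v : α, Real.negMulLog (probOf p fun ω => V ω = v))
        + Real.log (Fintype.card GG) := by
    rw [Fintype.sum_prod_type]
    have step : ∀ v : α,
        (∑ k : GG, Real.negMulLog (probOf p fun ω => (V ω, K ω) = (v, k)))
          = Real.negMulLog (probOf p fun ω => V ω = v)
            + (probOf p fun ω => V ω = v) * Real.log (Fintype.card GG) := by
      intro v
      have : ∀ k : GG, (probOf p fun ω => (V ω, K ω) = (v, k))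
          = (probOf p fun ω => V ω = v) / (Fintype.card GG : ℝ) := by
        intro k
        rw [probOf_congr p (E' := fun ω => V ω = v ∧ K ω = k)
          (fun ω => by simp [Prod.ext_iff])]
        exact h v k
      simp only [this]
      rw [Finset.sum_const, Finset.card_univ, nsmul_eq_mul]
      exact mul_negMulLog_div _ _ hn
    simp only [step]
    rw [Finset.sum_add_distrib, ← Finset.sum_mul, sum_probOf_eq p hp, one_mul]
  unfold ent
  rw [key, add_div]

end Aux

section KeyA

variable {Ω G XT WT FT ZT : Type*} [Fintype Ω] [Fintype G] [AddCommGroup G]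
    [Fintype XT] [Fintype WT] [Fintype FT] [Fintype ZT]

lemma keyA (p : Ω → ℝ)
    (S S' : Ω → G) (X : Ω → XT) (W' : Ω → WT) (F' : Ω → FT) (Z' : Ω → ZT)
    (hUnif : ∀ g : G, probOf p (fun ω => S ω = g) = 1 / (Fintype.card G : ℝ))
    (hInd : ∀ (g : G) (t : XT × ZT × WT × G × FT),
      probOf p (fun ω => S ω = g ∧ (X ω, Z' ω, W' ω, S' ω, F' ω) = t)
        = probOf p (fun ω => S ω = g)
          * probOf p (fun ω => (X ω, Z' ω, W' ω, S' ω, F' ω) = t))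
    {α : Type*} [Fintype α] (f : XT × ZT × WT × G × FT → α) (v : α) (k : G) :
    probOf p (fun ω => f (X ω, Z' ω, W' ω, S' ω, F' ω) = v ∧ S' ω + S ω = k)
      = probOf p (fun ω => f (X ω, Z' ω, W' ω, S' ω, F' ω) = v)
          / (Fintype.card G : ℝ) := by
  set Y5 : Ω → XT × ZT × WT × G × FT := fun ω => (X ω, Z' ω, W' ω, S' ω, F' ω)
    with hY5
  rw [probOf_fiber p Y5 (fun ω => f (Y5 ω) = v ∧ S' ω + S ω = k),
    probOf_fiber p Y5 (fun ω => f (Y5 ω) = v), Finset.sum_div]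
  refine Finset.sum_congr rfl fun t _ => ?_
  by_cases hv : f t = v
  · have h1 : probOf p (fun ω => (f (Y5 ω) = v ∧ S' ω + S ω = k) ∧ Y5 ω = t)
        = probOf p (fun ω => S ω = k - t.2.2.2.1 ∧ Y5 ω = t) := by
      refine probOf_congr p fun ω => ?_
      constructor
      · rintro ⟨⟨-, hsk⟩, ht⟩
        have hs' : S' ω = t.2.2.2.1 :=
          congrArg (fun u : XT × ZT × WT × G × FT => u.2.2.2.1) ht
        refine ⟨?_, ht⟩
        rw [← hs']
        exact eq_sub_of_add_eq' hsk
      · rintro ⟨hsg, ht⟩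
        have hs' : S' ω = t.2.2.2.1 :=
          congrArg (fun u : XT × ZT × WT × G × FT => u.2.2.2.1) ht
        refine ⟨⟨by rw [ht, hv], ?_⟩, ht⟩
        rw [hsg, hs']
        abel
    have h2 : probOf p (fun ω => f (Y5 ω) = v ∧ Y5 ω = t)
        = probOf p (fun ω => Y5 ω = t) := by
      refine probOf_congr p fun ω => ?_
      constructor
      · rintro ⟨-, ht⟩; exact ht
      · intro ht; exact ⟨by rw [ht, hv], ht⟩
    rw [h1, h2, hInd (k - t.2.2.2.1) t, hUnif]
    ring
  · have h1 : probOf p (fun ω => (f (Y5 ω) = v ∧ S' ω + S ω = k) ∧ Y5 ω = t)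
        = 0 := by
      rw [probOf_congr p (E' := fun _ => False)
        (fun ω => by
          constructor
          · rintro ⟨⟨hfv, -⟩, ht⟩; exact hv (by rw [← ht]; exact hfv)
          · intro h; exact h.elim)]
      simp [probOf]
    have h2 : probOf p (fun ω => f (Y5 ω) = v ∧ Y5 ω = t) = 0 := by
      rw [probOf_congr p (E' := fun _ => False)
        (fun ω => by
          constructor
          · rintro ⟨hfv, ht⟩; exact hv (by rw [← ht]; exact hfv)
          · intro h; exact h.elim)]
      simp [probOf]
    rw [h1, h2, zero_div]

end KeyA

/-- One-time pad privacy-leakage bound. -/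
theorem one_time_pad_privacy_leakage_bound
    {Ω G XT WT FT ZT : Type*} [Fintype Ω] [Fintype G] [AddCommGroup G]
    [Fintype XT] [Fintype WT] [Fintype FT] [Fintype ZT]
    (p : Ω → ℝ) (hp : IsPMF p)
    (S S' : Ω → G) (X : Ω → XT) (W' : Ω → WT) (F' : Ω → FT) (Z' : Ω → ZT)
    (hUnif : ∀ g : G, probOf p (fun ω => S ω = g) = 1 / (Fintype.card G : ℝ))
    (hInd : ∀ (g : G) (t : XT × ZT × WT × G × FT),
      probOf p (fun ω => S ω = g ∧ (X ω, Z' ω, W' ω, S' ω, F' ω) = t)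
        = probOf p (fun ω => S ω = g)
          * probOf p (fun ω => (X ω, Z' ω, W' ω, S' ω, F' ω) = t)) :
    condMutInf p X (fun ω => (W' ω, S' ω + S ω, Z' ω)) F'
      ≤ condMutInf p X (fun ω => (W' ω, Z' ω)) F' := by
  have hNe : Nonempty G := ⟨0⟩
  set c : ℝ := Real.log (Fintype.card G) / Real.log 2 with hc
  -- equivalences to move the key to the last coordinate
  let e1 : (WT × G × ZT) × FT ≃ ((WT × ZT) × FT) × G :=
    { toFun := fun x => (((x.1.1, x.1.2.2), x.2), x.1.2.1)
      invFun := fun x => ((x.1.1.1, x.2, x.1.1.2), x.1.2)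
      left_inv := fun ⟨⟨w, g, z⟩, f⟩ => rfl
      right_inv := fun ⟨⟨⟨w, z⟩, f⟩, g⟩ => rfl }
  let e2 : XT × (WT × G × ZT) × FT ≃ (XT × (WT × ZT) × FT) × G :=
    { toFun := fun x => ((x.1, (x.2.1.1, x.2.1.2.2), x.2.2), x.2.1.2.1)
      invFun := fun x => (x.1.1, (x.1.2.1.1, x.2, x.1.2.1.2), x.1.2.2)
      left_inv := fun ⟨x, ⟨w, g, z⟩, f⟩ => rfl
      right_inv := fun ⟨⟨x, ⟨w, z⟩, f⟩, g⟩ => rfl }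
  have E1 : ent p (fun ω => ((W' ω, S' ω + S ω, Z' ω), F' ω))
      = ent p (fun ω => ((W' ω, Z' ω), F' ω)) + c := by
    have h1 : ent p (fun ω => e1 ((W' ω, S' ω + S ω, Z' ω), F' ω))
        = ent p (fun ω => ((W' ω, S' ω + S ω, Z' ω), F' ω)) :=
      ent_equiv p e1 _
    have h2 : ent p (fun ω => (((W' ω, Z' ω), F' ω), S' ω + S ω))
        = ent p (fun ω => ((W' ω, Z' ω), F' ω)) + c :=
      ent_pair_unif p hp _ _ (fun v k =>
        keyA p S S' X W' F' Z' hUnif hInd (fun t => ((t.2.2.1, t.2.1), t.2.2.2.2)) v k)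
    rw [← h1]
    exact h2
  have E2 : ent p (fun ω => (X ω, (W' ω, S' ω + S ω, Z' ω), F' ω))
      = ent p (fun ω => (X ω, (W' ω, Z' ω), F' ω)) + c := by
    have h1 : ent p (fun ω => e2 (X ω, (W' ω, S' ω + S ω, Z' ω), F' ω))
        = ent p (fun ω => (X ω, (W' ω, S' ω + S ω, Z' ω), F' ω)) :=
      ent_equiv p e2 _
    have h2 : ent p (fun ω => ((X ω, (W' ω, Z' ω), F' ω), S' ω + S ω))
        = ent p (fun ω => (X ω, (W' ω, Z' ω), F' ω)) + c :=
      ent_pair_unif p hp _ _ (fun v k =>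
        keyA p S S' X W' F' Z' hUnif hInd (fun t => (t.1, (t.2.2.1, t.2.1), t.2.2.2.2)) v k)
    rw [← h1]
    exact h2
  unfold condMutInf
  rw [E1, E2]
  ring_nf
  exact le_refl _
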